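/- Let K be a compact subset of a Banach space X with ε_n(K)_X ≥ c₁[log₂ n]^{−α} for all n ≥ 2 and some α > 0. Let φ : ℕ → ℝ satisfy φ(n) ≥ c·log₂ n for some c > 0 and set γ_n = 2^{φ(n)}. Then there is C > 0 with d_n^{γ_n}(K)_X ≥ C·[log₂(n·φ(n))]^{−α} for all sufficiently large n. -/

import Mathlib

open MeasureTheory ENNReal Pointwise

/-- `N` is a norm on `ℝ^n`. -/
def IsNorm {n : ℕ} (N : (Fin n → ℝ) → ℝ) : Prop :=
  (∀ y, N y = 0 ↔ y = 0) ∧ (∀ (a : ℝ) (y), N (a • y) = |a| * N y) ∧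
    (∀ y z, N (y + z) ≤ N y + N z)

section Aux
variable {n : ℕ} {N : (Fin n → ℝ) → ℝ}

theorem isnorm_zero (hN : IsNorm N) : N 0 = 0 := by
  have h := hN.2.1 0 0
  simpa using h

theorem isnorm_neg (hN : IsNorm N) (y : Fin n → ℝ) : N (-y) = N y := by
  have h := hN.2.1 (-1) y
  simpa using h

theorem isnorm_nonneg (hN : IsNorm N) (y : Fin n → ℝ) : 0 ≤ N y := by
  have h := hN.2.2 y (-y)
  rw [add_neg_cancel, isnorm_zero hN, isnorm_neg hN] at h
  linarith

theorem isnorm_upper (hN : IsNorm N) : ∃ b : ℝ, 0 ≤ b ∧ ∀ y, N y ≤ b * ‖y‖ := by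
  refine ⟨∑ i, N (Pi.single i 1), Finset.sum_nonneg fun i _ => isnorm_nonneg hN _, fun y => ?_⟩
  calc N y = N (∑ i, Pi.single i (y i)) := by rw [Finset.univ_sum_single]
    _ ≤ ∑ i, N (Pi.single i (y i)) :=
        Finset.le_sum_of_subadditive N (isnorm_zero hN).le hN.2.2 _ _
    _ ≤ ∑ i, N (Pi.single i 1) * ‖y‖ := by
        refine Finset.sum_le_sum fun i _ => ?_
        have h1 : Pi.single i (y i) = (y i) • (Pi.single i 1 : Fin n → ℝ) := by
          rw [← Pi.single_smul]; simp
        rw [h1, hN.2.1]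
        have h2 : |y i| ≤ ‖y‖ := by
          simpa [Real.norm_eq_abs] using norm_le_pi_norm y i
        calc |y i| * N (Pi.single i 1) ≤ ‖y‖ * N (Pi.single i 1) :=
              mul_le_mul_of_nonneg_right h2 (isnorm_nonneg hN _)
          _ = N (Pi.single i 1) * ‖y‖ := mul_comm _ _
    _ = (∑ i, N (Pi.single i 1)) * ‖y‖ := by rw [Finset.sum_mul]

theorem isnorm_continuous (hN : IsNorm N) : Continuous N := by
  obtain ⟨b, hb0, hb⟩ := isnorm_upper hN
  have key : ∀ y z : Fin n → ℝ, N y - N z ≤ b * ‖y - z‖ := by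
    intro y z
    have h := hN.2.2 (y - z) z
    rw [sub_add_cancel] at h
    have := hb (y - z)
    linarith
  have lip : LipschitzWith ⟨b, hb0⟩ N := by
    apply LipschitzWith.of_dist_le_mul
    intro y z
    rw [Real.dist_eq, dist_eq_norm, abs_sub_le_iff]
    refine ⟨key y z, ?_⟩
    have h := key z y
    rwa [norm_sub_rev] at h
  exact lip.continuous

theorem isnorm_lower (hN : IsNorm N) : ∃ a : ℝ, 0 < a ∧ ∀ y, a * ‖y‖ ≤ N y := by
  rcases Nat.eq_zero_or_pos n with hn | hn
  · refine ⟨1, one_pos, fun y => ?_⟩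
    subst hn
    have hy : y = 0 := Subsingleton.elim _ _
    rw [hy, isnorm_zero hN, norm_zero, mul_zero]
  · haveI : Nonempty (Fin n) := ⟨⟨0, hn⟩⟩
    have hsne : (Metric.sphere (0 : Fin n → ℝ) 1).Nonempty :=
      NormedSpace.sphere_nonempty.mpr zero_le_one
    obtain ⟨x₀, hx₀s, hmin⟩ := (isCompact_sphere (0 : Fin n → ℝ) 1).exists_isMinOn hsne
      ((isnorm_continuous hN).continuousOn)
    have hx₀n : ‖x₀‖ = 1 := by simpa using hx₀s
    have ha : 0 < N x₀ := by
      rcases (isnorm_nonneg hN x₀).lt_or_eq with h | h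
      · exact h
      · exfalso
        have hx0 : x₀ = 0 := (hN.1 x₀).mp h.symm
        rw [hx0, norm_zero] at hx₀n
        norm_num at hx₀n
    refine ⟨N x₀, ha, fun y => ?_⟩
    rcases eq_or_ne y 0 with rfl | hy
    · simp [isnorm_zero hN]
    · have hpos : 0 < ‖y‖ := norm_pos_iff.mpr hy
      have hu : (‖y‖⁻¹ • y) ∈ Metric.sphere (0 : Fin n → ℝ) 1 := by
        simp [norm_smul, abs_of_nonneg (inv_nonneg.mpr (norm_nonneg y)),
          inv_mul_cancel₀ (ne_of_gt hpos)]
      have h2 : N x₀ ≤ N (‖y‖⁻¹ • y) := hmin hu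
      have h3 : N (‖y‖⁻¹ • y) = ‖y‖⁻¹ * N y := by
        rw [hN.2.1]
        congr 1
        exact abs_of_nonneg (inv_nonneg.mpr (norm_nonneg y))
      rw [h3] at h2
      have h4 := mul_le_mul_of_nonneg_right h2 hpos.le
      calc N x₀ * ‖y‖ ≤ ‖y‖⁻¹ * N y * ‖y‖ := h4
        _ = N y := by field_simp

end Aux

theorem isnorm_smul_set {n : ℕ} {N : (Fin n → ℝ) → ℝ} (hN : IsNorm N) {r : ℝ} (hr : 0 < r) :
    {z : Fin n → ℝ | N z ≤ r} = r • {z : Fin n → ℝ | N z ≤ 1} := by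
  ext z
  rw [Set.mem_smul_set_iff_inv_smul_mem₀ (ne_of_gt hr)]
  simp only [Set.mem_setOf_eq]
  rw [hN.2.1, abs_of_nonneg (inv_nonneg.mpr hr.le)]
  rw [inv_mul_le_iff₀ hr, mul_one]

theorem isnorm_packing {n : ℕ} {N : (Fin n → ℝ) → ℝ} (hN : IsNorm N) {δ : ℝ} (hδ : 0 < δ)
    (T : Finset (Fin n → ℝ)) (hT : ∀ x ∈ T, N x ≤ 1)
    (hsep : (T : Set (Fin n → ℝ)).Pairwise fun x x' => δ < N (x - x')) :
    (T.card : ℝ) ≤ (1 + 2 / δ) ^ n := by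
  classical
  set μ : Measure (Fin n → ℝ) := volume with hμ
  set B : Set (Fin n → ℝ) := {z | N z ≤ 1} with hB
  have hfr : Module.finrank ℝ (Fin n → ℝ) = n := by
    rw [Module.finrank_pi]; exact Fintype.card_fin n
  have hscale : ∀ r : ℝ, 0 < r →
      μ {z : Fin n → ℝ | N z ≤ r} = ENNReal.ofReal (r ^ n) * μ B := by
    intro r hr
    rw [isnorm_smul_set hN hr, Measure.addHaar_smul, hfr,
      abs_of_nonneg (pow_nonneg hr.le n)]
  obtain ⟨b, hb0, hb⟩ := isnorm_upper hN
  obtain ⟨a, ha0, ha⟩ := isnorm_lower hN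
  have hBpos : 0 < μ B := by
    refine lt_of_lt_of_le (Metric.measure_ball_pos μ 0 (show (0:ℝ) < 1/(b+1) by positivity))
      (measure_mono ?_)
    intro z hz
    simp only [Metric.mem_ball, dist_zero_right] at hz
    have h1 : N z ≤ b * ‖z‖ := hb z
    have h2 : b * ‖z‖ ≤ b * (1/(b+1)) := mul_le_mul_of_nonneg_left hz.le hb0
    have h3 : b * (1/(b+1)) ≤ 1 := by
      rw [mul_one_div, div_le_one (by linarith)]; linarith
    simp only [hB, Set.mem_setOf_eq]
    linarith
  have hBfin : μ B < ⊤ := by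
    refine lt_of_le_of_lt (measure_mono ?_) (measure_closedBall_lt_top (x := (0 : Fin n → ℝ))
      (r := a⁻¹))
    intro z hz
    simp only [hB, Set.mem_setOf_eq] at hz
    simp only [Metric.mem_closedBall, dist_zero_right]
    have h1 := ha z
    rw [← one_div, le_div_iff₀ ha0]
    nlinarith
  -- the small disjoint balls
  set C : (Fin n → ℝ) → Set (Fin n → ℝ) := fun x => {z | N (z - x) ≤ δ / 2} with hC
  have hCvol : ∀ x : Fin n → ℝ, μ (C x) = ENNReal.ofReal ((δ/2) ^ n) * μ B := by
    intro x
    have hCeq : C x = x +ᵥ {z : Fin n → ℝ | N z ≤ δ/2} := by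
      ext z
      rw [Set.mem_vadd_set_iff_neg_vadd_mem]
      simp only [hC, Set.mem_setOf_eq, vadd_eq_add, neg_add_eq_sub]
    rw [hCeq, measure_vadd, hscale (δ/2) (by linarith)]
  have hCmeas : ∀ x : Fin n → ℝ, MeasurableSet (C x) := by
    intro x
    have : IsClosed (C x) :=
      IsClosed.preimage ((isnorm_continuous hN).comp (continuous_id.sub continuous_const))
        isClosed_Iic
    exact this.measurableSet
  have hCdisj : (T : Set (Fin n → ℝ)).PairwiseDisjoint C := by
    intro x hx x' hx' hne
    rw [Function.onFun, Set.disjoint_left]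
    intro z hz hz'
    simp only [hC, Set.mem_setOf_eq] at hz hz'
    have h1 : N (x - x') ≤ N (x - z) + N (z - x') := by
      have := hN.2.2 (x - z) (z - x')
      simpa using this
    have h2 : N (x - z) = N (z - x) := by rw [← isnorm_neg hN (z - x), neg_sub]
    have h3 := hsep hx hx' hne
    rw [h2] at h1
    linarith
  have hunion : (⋃ x ∈ T, C x) ⊆ {z : Fin n → ℝ | N z ≤ 1 + δ/2} := by
    intro z hz
    simp only [Set.mem_iUnion] at hz
    obtain ⟨x, hx, hzx⟩ := hz
    simp only [hC, Set.mem_setOf_eq] at hzx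
    simp only [Set.mem_setOf_eq]
    have h1 : N z ≤ N (z - x) + N x := by
      have := hN.2.2 (z - x) x
      simpa using this
    have h2 := hT x hx
    linarith
  have hcount : (T.card : ℝ≥0∞) * (ENNReal.ofReal ((δ/2)^n) * μ B)
      ≤ ENNReal.ofReal ((1 + δ/2)^n) * μ B := by
    calc (T.card : ℝ≥0∞) * (ENNReal.ofReal ((δ/2)^n) * μ B)
        = ∑ x ∈ T, μ (C x) := by
          rw [Finset.sum_congr rfl (fun x _ => hCvol x), Finset.sum_const, nsmul_eq_mul]
      _ = μ (⋃ x ∈ T, C x) := (measure_biUnion_finset hCdisj (fun x _ => hCmeas x)).symm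
      _ ≤ μ {z : Fin n → ℝ | N z ≤ 1 + δ/2} := measure_mono hunion
      _ = ENNReal.ofReal ((1 + δ/2)^n) * μ B := hscale _ (by linarith)
  rw [← mul_assoc] at hcount
  have hcount2 : (T.card : ℝ≥0∞) * ENNReal.ofReal ((δ/2)^n)
      ≤ ENNReal.ofReal ((1 + δ/2)^n) :=
    (ENNReal.mul_le_mul_iff_left (ne_of_gt hBpos) (ne_of_lt hBfin)).mp hcount
  have hδ2 : (0:ℝ) < (δ/2)^n := by positivity
  have hcount3 : (T.card : ℝ≥0∞) ≤ ENNReal.ofReal ((1 + δ/2)^n / (δ/2)^n) := by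
    rw [ENNReal.ofReal_div_of_pos hδ2]
    rw [ENNReal.le_div_iff_mul_le (Or.inl (by simp [ENNReal.ofReal_eq_zero]; linarith))
      (Or.inl ENNReal.ofReal_ne_top)]
    exact hcount2
  have hfinal : (T.card : ℝ) ≤ (1 + δ/2)^n / (δ/2)^n := by
    rw [← ENNReal.ofReal_natCast T.card] at hcount3
    exact (ENNReal.ofReal_le_ofReal_iff (by positivity)).mp hcount3
  refine le_trans hfinal (le_of_eq ?_)
  rw [← div_pow]
  congr 1
  field_simp
  ring
theorem isnorm_net {n : ℕ} {N : (Fin n → ℝ) → ℝ} (hN : IsNorm N) {δ : ℝ} (hδ : 0 < δ) :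
    ∃ T : Finset (Fin n → ℝ), (∀ x ∈ T, N x ≤ 1) ∧ ((T.card : ℝ) ≤ (1 + 2 / δ) ^ n) ∧
      ∀ y, N y ≤ 1 → ∃ x ∈ T, N (y - x) ≤ δ := by
  classical
  by_contra hcon
  push_neg at hcon
  have key : ∀ k : ℕ, ∃ T : Finset (Fin n → ℝ), (∀ x ∈ T, N x ≤ 1) ∧
      ((T : Set (Fin n → ℝ)).Pairwise fun x x' => δ < N (x - x')) ∧ T.card = k := by
    intro k
    induction k with
    | zero => exact ⟨∅, by simp, by simp, rfl⟩
    | succ k ih =>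
      obtain ⟨T, hT1, hT2, hT3⟩ := ih
      have hcard : (T.card : ℝ) ≤ (1 + 2 / δ) ^ n := isnorm_packing hN hδ T hT1 hT2
      obtain ⟨y, hy1, hy2⟩ := hcon T hT1 hcard
      have hyT : y ∉ T := by
        intro hmem
        have h := hy2 y hmem
        rw [sub_self, isnorm_zero hN] at h
        exact absurd h (not_lt.mpr hδ.le)
      refine ⟨insert y T, ?_, ?_, by rw [Finset.card_insert_of_notMem hyT, hT3]⟩
      · intro x hx
        rcases Finset.mem_insert.mp hx with rfl | hx
        exacts [hy1, hT1 x hx]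
      · intro x hx x' hx' hne
        simp only [Finset.coe_insert, Set.mem_insert_iff] at hx hx'
        rcases hx with rfl | hx <;> rcases hx' with rfl | hx'
        · exact absurd rfl hne
        · exact hy2 x' hx'
        · have h := hy2 x hx
          rwa [← neg_sub, isnorm_neg hN] at h
        · exact hT2 hx hx' hne
  obtain ⟨T, hT1, hT2, hT3⟩ := key (⌊(1 + 2 / δ) ^ n⌋₊ + 1)
  have h1 : (T.card : ℝ) ≤ (1 + 2 / δ) ^ n := isnorm_packing hN hδ T hT1 hT2
  have h2 : ((1 + 2 / δ) ^ n : ℝ) < ⌊(1 + 2 / δ) ^ n⌋₊ + 1 := Nat.lt_floor_add_one _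
  rw [hT3] at h1
  push_cast at h1
  linarith
theorem logb_le_two_mul_aux {x : ℝ} (hx : 1 ≤ x) : Real.logb 2 x ≤ 2 * x := by
  have hx0 : 0 < x := lt_of_lt_of_le one_pos hx
  have h1 : Real.log x ≤ x - 1 := Real.log_le_sub_one_of_pos hx0
  have h2 : (0.6931471803 : ℝ) < Real.log 2 := Real.log_two_gt_d9
  rw [Real.logb, div_le_iff₀ (by linarith)]
  nlinarith

variable {X : Type*} [NormedAddCommGroup X] [NormedSpace ℝ X] [CompleteSpace X]

/-- The fixed Lipschitz width `d^γ(K, Y_n)_X` for the norm `N` on `ℝ^n`. -/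
noncomputable def fixedLipWidth {n : ℕ} (K : Set X) (N : (Fin n → ℝ) → ℝ) (γ : ℝ) : ℝ :=
  ⨅ L : {L : (Fin n → ℝ) → X //
      ∀ y y', N y ≤ 1 → N y' ≤ 1 → ‖L y - L y'‖ ≤ γ * N (y - y')},
    ⨆ f : K, ⨅ y : {y : Fin n → ℝ // N y ≤ 1}, ‖(f : X) - L.1 y.1‖

/-- The Lipschitz width `d_n^γ(K)_X`. -/
noncomputable def lipWidth (K : Set X) (n : ℕ) (γ : ℝ) : ℝ :=
  ⨅ N : {N : (Fin n → ℝ) → ℝ // IsNorm N}, fixedLipWidth K N.1 γ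

/-- The entropy number `ε_n(K)_X`. -/
noncomputable def entropyNum (K : Set X) (n : ℕ) : ℝ :=
  sInf {ε : ℝ | 0 < ε ∧ ∃ g : Fin (2 ^ n) → X, K ⊆ ⋃ j, Metric.closedBall (g j) ε}

/-- The Chebyshev radius of `K`. -/
noncomputable def chebRad (K : Set X) : ℝ :=
  ⨅ g : X, ⨆ f : K, ‖g - (f : X)‖
/-- Key covering step: if the Lipschitz width is `< ε ≤ 1 ≤ γ`, then `K` is covered by
`2 ^ ⌈n logb 2 (3γ/ε)⌉₊` balls of radius `2ε`. -/
theorem entropy_le_of_lipWidth (K : Set X) (hK : IsCompact K) {n : ℕ} {γ ε : ℝ}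
    (hε : 0 < ε) (hε1 : ε ≤ 1) (hγ1 : 1 ≤ γ)
    (hlt : lipWidth K n γ < ε) :
    entropyNum K (⌈(n : ℝ) * Real.logb 2 (3 * γ / ε)⌉₊) ≤ 2 * ε := by
  classical
  have hγpos : (0:ℝ) < γ := lt_of_lt_of_le one_pos hγ1
  set δ : ℝ := ε / γ with hδ_def
  have hδpos : 0 < δ := div_pos hε hγpos
  have hδ1 : δ ≤ 1 := by rw [hδ_def, div_le_one hγpos]; linarith
  set Q : ℝ := 3 * γ / ε with hQ_def
  have hQ3 : (3:ℝ) ≤ Q := by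
    rw [hQ_def, le_div_iff₀ hε]; nlinarith
  have hQpos : (0:ℝ) < Q := by linarith
  set m : ℕ := ⌈(n : ℝ) * Real.logb 2 Q⌉₊ with hm_def
  -- extract a norm and map
  haveI hNne : Nonempty {N : (Fin n → ℝ) → ℝ // IsNorm N} :=
    ⟨⟨fun y => ‖y‖, fun y => norm_eq_zero,
      fun a y => by show ‖a • y‖ = |a| * ‖y‖; rw [norm_smul, Real.norm_eq_abs],
      fun y z => norm_add_le y z⟩⟩
  unfold lipWidth at hlt
  obtain ⟨Ns, hNlt⟩ := exists_lt_of_ciInf_lt hlt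
  set Nn : (Fin n → ℝ) → ℝ := Ns.1 with hNn_def
  have hNn : IsNorm Nn := Ns.2
  haveI hLne : Nonempty {L : (Fin n → ℝ) → X //
      ∀ y y', Nn y ≤ 1 → Nn y' ≤ 1 → ‖L y - L y'‖ ≤ γ * Nn (y - y')} :=
    ⟨⟨fun _ => 0, fun y y' _ _ => by
      rw [sub_self, norm_zero]
      exact mul_nonneg hγpos.le (isnorm_nonneg hNn _)⟩⟩
  unfold fixedLipWidth at hNlt
  obtain ⟨Ls, hLlt⟩ := exists_lt_of_ciInf_lt hNlt
  set L : (Fin n → ℝ) → X := Ls.1 with hL_def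
  have hL : ∀ y y', Nn y ≤ 1 → Nn y' ≤ 1 → ‖L y - L y'‖ ≤ γ * Nn (y - y') := Ls.2
  haveI hyne : Nonempty {y : Fin n → ℝ // Nn y ≤ 1} :=
    ⟨⟨0, by rw [isnorm_zero hNn]; norm_num⟩⟩
  obtain ⟨R, hR⟩ := hK.isBounded.exists_norm_le
  -- each element of K is ε-close to some L y
  have hfK : ∀ f : K, (⨅ y : {y : Fin n → ℝ // Nn y ≤ 1}, ‖(f : X) - L y.1‖) < ε := by
    intro f
    refine lt_of_le_of_lt ?_ hLlt
    refine le_ciSup (f := fun f : K => ⨅ y : {y : Fin n → ℝ // Nn y ≤ 1}, ‖(f : X) - L y.1‖)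
      ⟨R + ‖L 0‖, ?_⟩ f
    rintro x ⟨f', rfl⟩
    have hbdd : BddBelow (Set.range fun y : {y : Fin n → ℝ // Nn y ≤ 1} => ‖(f' : X) - L y.1‖) := by
      refine ⟨0, ?_⟩
      rintro x ⟨y, rfl⟩
      exact norm_nonneg _
    calc (⨅ y : {y : Fin n → ℝ // Nn y ≤ 1}, ‖(f' : X) - L y.1‖)
        ≤ ‖(f' : X) - L 0‖ := ciInf_le_of_le hbdd ⟨0, by rw [isnorm_zero hNn]; norm_num⟩ le_rfl
      _ ≤ ‖(f' : X)‖ + ‖L 0‖ := norm_sub_le _ _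
      _ ≤ R + ‖L 0‖ := by have := hR (f' : X) f'.2; linarith
  -- net of the unit ball
  obtain ⟨T, hT1, hT2, hT3⟩ := isnorm_net hNn hδpos
  have hcard : T.card ≤ 2 ^ m := by
    have h1 : (T.card : ℝ) ≤ Q ^ n := by
      refine le_trans hT2 ?_
      have h0 : (0:ℝ) ≤ 1 + 2 / δ := by positivity
      have h2 : (1 + 2 / δ) ≤ 3 / δ := by
        rw [le_div_iff₀ hδpos]
        have e : (1 + 2 / δ) * δ = δ + 2 := by field_simp
        rw [e]; linarith
      have h3 : (3 : ℝ) / δ = Q := by rw [hδ_def, hQ_def, div_div_eq_mul_div]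
      calc ((1:ℝ) + 2 / δ) ^ n ≤ (3 / δ) ^ n := pow_le_pow_left₀ h0 h2 n
        _ = Q ^ n := by rw [h3]
    have h2 : (Q : ℝ) ^ n ≤ ((2 ^ m : ℕ) : ℝ) := by
      have hQ2 : Q = (2:ℝ) ^ Real.logb 2 Q := (Real.rpow_logb two_pos (by norm_num) hQpos).symm
      calc Q ^ n = ((2:ℝ) ^ Real.logb 2 Q) ^ (n : ℕ) := by rw [← hQ2]
        _ = (2:ℝ) ^ (Real.logb 2 Q * n) := by
            rw [← Real.rpow_natCast ((2:ℝ) ^ Real.logb 2 Q) n, ← Real.rpow_mul two_pos.le]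
        _ ≤ (2:ℝ) ^ (m : ℝ) := Real.rpow_le_rpow_of_exponent_le one_le_two
            (by rw [mul_comm]; exact Nat.le_ceil _)
        _ = ((2 ^ m : ℕ) : ℝ) := by rw [Real.rpow_natCast]; push_cast; ring
    exact_mod_cast le_trans h1 h2
  -- build the covering map
  set l := T.toList with hl_def
  have hlen : l.length = T.card := Finset.length_toList T
  have hg : ∃ g : Fin (2 ^ m) → X, ∀ x ∈ T, ∃ j, g j = L x := by
    refine ⟨fun j => if h : (j : ℕ) < l.length then L (l.get ⟨j, h⟩) else L 0, ?_⟩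
    intro x hx
    obtain ⟨i, hi⟩ := List.get_of_mem (Finset.mem_toList.mpr hx)
    have hic : (i : ℕ) < T.card := by rw [← hlen]; exact i.2
    have hilt : (i : ℕ) < 2 ^ m := lt_of_lt_of_le hic hcard
    refine ⟨⟨i, hilt⟩, ?_⟩
    have hii : ((⟨(i : ℕ), hilt⟩ : Fin (2 ^ m)) : ℕ) < l.length := i.2
    dsimp only
    rw [dif_pos hii]
    congr 1
  obtain ⟨g, hgT⟩ := hg
  -- conclude
  rw [entropyNum]
  refine csInf_le ⟨0, fun x hx => hx.1.le⟩ ⟨by linarith, g, ?_⟩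
  intro f hf
  obtain ⟨y, hylt⟩ := exists_lt_of_ciInf_lt (hfK ⟨f, hf⟩)
  obtain ⟨x, hxT, hxnet⟩ := hT3 y.1 y.2
  obtain ⟨j, hj⟩ := hgT x hxT
  refine Set.mem_iUnion.mpr ⟨j, ?_⟩
  rw [Metric.mem_closedBall, dist_eq_norm, hj]
  have hLyx : ‖L y.1 - L x‖ ≤ γ * Nn (y.1 - x) := hL y.1 x y.2 (hT1 x hxT)
  have h5 : γ * Nn (y.1 - x) ≤ γ * δ := mul_le_mul_of_nonneg_left hxnet hγpos.le
  have h6 : γ * δ = ε := by rw [hδ_def]; field_simp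
  have h7 : f - L x = (f - L y.1) + (L y.1 - L x) := by abel
  calc ‖f - L x‖ ≤ ‖f - L y.1‖ + ‖L y.1 - L x‖ := by rw [h7]; exact norm_add_le _ _
    _ ≤ 2 * ε := by linarith [hylt.le]
set_option maxHeartbeats 1000000

/-- a lower bound `ε_n(K)_X ≥ c₁ [log₂ n]^{-α}` on the entropy numbers
yields `d_n^{γ_n}(K)_X ≥ C [log₂(n φ(n))]^{-α}` for `γ_n = 2^{φ(n)}`, `φ(n) ≥ c log₂ n`. -/
theorem lipWidth_lower_bound_log (K : Set X) (hK : IsCompact K)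
    (α c c₁ : ℝ) (hα : 0 < α) (hc : 0 < c) (hc₁ : 0 < c₁)
    (φ : ℕ → ℝ) (hφ : ∀ n : ℕ, 1 ≤ n → c * Real.logb 2 n ≤ φ n)
    (hε : ∀ n : ℕ, 2 ≤ n → c₁ * Real.logb 2 n ^ (-α) ≤ entropyNum K n) :
    ∃ C > (0 : ℝ), ∃ N : ℕ, ∀ n ≥ N,
      C * Real.logb 2 ((n : ℝ) * φ n) ^ (-α) ≤ lipWidth K n ((2 : ℝ) ^ φ n) := by
  classical
  have h2a : (0:ℝ) < (2:ℝ) ^ (-α) := Real.rpow_pos_of_pos two_pos _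
  set C : ℝ := min 1 (c₁ * (2:ℝ) ^ (-α) / 4) with hC_def
  have hC_pos : 0 < C := lt_min one_pos (by positivity)
  have hC_le1 : C ≤ 1 := min_le_left _ _
  have hC_le : C ≤ c₁ * (2:ℝ) ^ (-α) / 4 := min_le_right _ _
  set K₂ : ℝ := 2 + 2 * α * (1 / c + 2) with hK2_def
  have hK2pos : 0 < K₂ := by positivity
  set t : ℝ := max (max (1 / c) ((Real.logb 2 3 + Real.logb 2 C⁻¹) / c))
    (max (Real.logb 2 (K₂ + 1)) 1) with ht_def
  have ht1 : (1:ℝ) ≤ t := le_trans (le_max_right _ _) (le_max_right _ _)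
  refine ⟨C, hC_pos, max 2 (⌈(2:ℝ) ^ t⌉₊ + 1), fun n hn => ?_⟩
  have hn2 : 2 ≤ n := le_trans (le_max_left _ _) hn
  have hn2R : (2:ℝ) ≤ (n:ℝ) := by exact_mod_cast hn2
  have hnpos : (0:ℝ) < (n:ℝ) := by linarith
  have hnt : (2:ℝ) ^ t ≤ (n:ℝ) := by
    have h1 : (⌈(2:ℝ) ^ t⌉₊ + 1 : ℕ) ≤ n := le_trans (le_max_right _ _) hn
    have h2 : (⌈(2:ℝ) ^ t⌉₊ : ℕ) ≤ n := by omega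
    calc (2:ℝ) ^ t ≤ (⌈(2:ℝ) ^ t⌉₊ : ℝ) := Nat.le_ceil _
      _ ≤ (n:ℝ) := by exact_mod_cast h2
  have hlogn_t : t ≤ Real.logb 2 (n:ℝ) := by
    calc t = Real.logb 2 ((2:ℝ) ^ t) := (Real.logb_rpow two_pos (by norm_num)).symm
      _ ≤ Real.logb 2 (n:ℝ) :=
          (Real.logb_le_logb one_lt_two (Real.rpow_pos_of_pos two_pos t) hnpos).mpr hnt
  have hlogn1 : (1:ℝ) ≤ Real.logb 2 (n:ℝ) := le_trans ht1 hlogn_t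
  have hφn : c * Real.logb 2 (n:ℝ) ≤ φ n := hφ n (by omega)
  have hφ1 : (1:ℝ) ≤ φ n := by
    have h1c : 1 / c ≤ Real.logb 2 (n:ℝ) :=
      le_trans (le_trans (le_max_left _ _) (le_max_left _ _)) hlogn_t
    have h2 := mul_le_mul_of_nonneg_left h1c hc.le
    rw [mul_one_div, div_self (ne_of_gt hc)] at h2
    linarith
  -- P
  set P : ℝ := Real.logb 2 ((n:ℝ) * φ n) with hP_def
  have hnφpos : (0:ℝ) < (n:ℝ) * φ n := mul_pos hnpos (lt_of_lt_of_le one_pos hφ1)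
  have hP_split : P = Real.logb 2 (n:ℝ) + Real.logb 2 (φ n) :=
    Real.logb_mul (ne_of_gt hnpos) (by linarith)
  have hlogφ0 : (0:ℝ) ≤ Real.logb 2 (φ n) := Real.logb_nonneg one_lt_two hφ1
  have hP1 : (1:ℝ) ≤ P := by rw [hP_split]; linarith
  have hPpos : (0:ℝ) < P := by linarith
  have hPα_pos : 0 < P ^ (-α) := Real.rpow_pos_of_pos hPpos _
  -- γ, ε, δ, Q, S, m
  set γ : ℝ := (2:ℝ) ^ φ n with hγ_def
  have hγpos : (0:ℝ) < γ := Real.rpow_pos_of_pos two_pos _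
  have hγ1 : (1:ℝ) ≤ γ := by
    calc (1:ℝ) = (2:ℝ) ^ (0:ℝ) := (Real.rpow_zero 2).symm
      _ ≤ γ := Real.rpow_le_rpow_of_exponent_le one_le_two (by linarith)
  set ε : ℝ := C * P ^ (-α) with hε_def
  have hεpos : 0 < ε := mul_pos hC_pos hPα_pos
  have hε1 : ε ≤ 1 := by
    have h1 : P ^ (-α) ≤ 1 := Real.rpow_le_one_of_one_le_of_nonpos hP1 (by linarith)
    calc ε = C * P ^ (-α) := rfl
      _ ≤ 1 * 1 := mul_le_mul hC_le1 h1 hPα_pos.le one_pos.le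
      _ = 1 := one_mul 1
  set Q : ℝ := 3 * γ / ε with hQ_def
  have hQ3 : (3:ℝ) ≤ Q := by
    rw [hQ_def, le_div_iff₀ hεpos]
    have hεγ : ε ≤ γ := le_trans hε1 hγ1
    linarith
  have hQpos : (0:ℝ) < Q := by linarith
  set S : ℝ := Real.logb 2 Q with hS_def
  have hS1 : (1:ℝ) ≤ S := by
    calc (1:ℝ) = Real.logb 2 2 := (Real.logb_self_eq_one one_lt_two).symm
      _ ≤ S := (Real.logb_le_logb one_lt_two two_pos hQpos).mpr (by linarith)
  set m : ℕ := ⌈(n:ℝ) * S⌉₊ with hm_def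
  have hnS2 : (2:ℝ) ≤ (n:ℝ) * S := by
    have h := mul_le_mul hn2R hS1 one_pos.le hnpos.le
    rw [mul_one] at h
    linarith
  have hmR : (2:ℝ) ≤ (m:ℝ) := le_trans hnS2 (Nat.le_ceil _)
  have hm2 : 2 ≤ m := by exact_mod_cast hmR
  -- decompose S
  have hS_eq : S = Real.logb 2 3 + φ n - Real.logb 2 ε := by
    rw [hS_def, hQ_def, Real.logb_div (by positivity) (ne_of_gt hεpos),
      Real.logb_mul (by norm_num) (ne_of_gt hγpos), hγ_def,
      Real.logb_rpow two_pos (by norm_num)]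
  have hlogε : Real.logb 2 ε = Real.logb 2 C + (-α) * Real.logb 2 P := by
    rw [hε_def, Real.logb_mul (ne_of_gt hC_pos) (ne_of_gt hPα_pos)]
    congr 1
    rw [Real.logb, Real.logb, Real.log_rpow hPpos]
    ring
  -- bound S
  have hSb : S ≤ K₂ * φ n := by
    have h1 : Real.logb 2 3 - Real.logb 2 C ≤ φ n := by
      have ht2 : (Real.logb 2 3 + Real.logb 2 C⁻¹) / c ≤ Real.logb 2 (n:ℝ) :=
        le_trans (le_trans (le_max_right _ _) (le_max_left _ _)) hlogn_t
      rw [Real.logb_inv] at ht2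
      have h3 := mul_le_mul_of_nonneg_left ht2 hc.le
      rw [mul_div_cancel₀ _ (ne_of_gt hc)] at h3
      linarith
    have h2 : Real.logb 2 P ≤ 2 * P := logb_le_two_mul_aux hP1
    have h4 : Real.logb 2 (n:ℝ) ≤ φ n / c := by
      rw [le_div_iff₀ hc]; linarith [hφn]
    have h5 : Real.logb 2 (φ n) ≤ 2 * φ n := logb_le_two_mul_aux hφ1
    have h3 : P ≤ (1 / c + 2) * φ n := by
      rw [hP_split]
      have : φ n / c = (1 / c) * φ n := by ring
      linarith
    have h6 : α * Real.logb 2 P ≤ 2 * α * ((1 / c + 2) * φ n) := by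
      have h7 : α * Real.logb 2 P ≤ α * (2 * P) := mul_le_mul_of_nonneg_left h2 hα.le
      have h8 : α * (2 * P) ≤ α * (2 * ((1 / c + 2) * φ n)) := by
        refine mul_le_mul_of_nonneg_left ?_ hα.le
        linarith
      linarith
    rw [hS_eq, hlogε, hK2_def]
    have h9 : (2 + 2 * α * (1 / c + 2)) * φ n = 2 * φ n + 2 * α * ((1 / c + 2) * φ n) := by
      ring
    rw [h9]
    linarith
  -- bound m and logb 2 m
  have hm_le : (m:ℝ) ≤ (K₂ + 1) * ((n:ℝ) * φ n) := by
    have h1 : (m:ℝ) < (n:ℝ) * S + 1 := Nat.ceil_lt_add_one (by positivity)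
    have h2 : (n:ℝ) * S ≤ (n:ℝ) * (K₂ * φ n) := mul_le_mul_of_nonneg_left hSb (by positivity)
    have h3 : (1:ℝ) ≤ (n:ℝ) * φ n := by
      have h := mul_le_mul hn2R hφ1 one_pos.le hnpos.le
      rw [mul_one] at h
      linarith
    have h4 : (n:ℝ) * (K₂ * φ n) = K₂ * ((n:ℝ) * φ n) := by ring
    have h5 : (K₂ + 1) * ((n:ℝ) * φ n) = K₂ * ((n:ℝ) * φ n) + (n:ℝ) * φ n := by ring
    linarith
  have hlogm1 : (1:ℝ) ≤ Real.logb 2 (m:ℝ) := by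
    calc (1:ℝ) = Real.logb 2 2 := (Real.logb_self_eq_one one_lt_two).symm
      _ ≤ Real.logb 2 (m:ℝ) := (Real.logb_le_logb one_lt_two two_pos (by linarith)).mpr hmR
  have hlogm : Real.logb 2 (m:ℝ) ≤ 2 * P := by
    have h1 : Real.logb 2 (m:ℝ) ≤ Real.logb 2 ((K₂ + 1) * ((n:ℝ) * φ n)) :=
      (Real.logb_le_logb one_lt_two (by linarith) (by positivity)).mpr hm_le
    have h2 : Real.logb 2 ((K₂ + 1) * ((n:ℝ) * φ n)) = Real.logb 2 (K₂ + 1) + P := by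
      rw [Real.logb_mul (by positivity) (ne_of_gt hnφpos)]
    have h3 : Real.logb 2 (K₂ + 1) ≤ P := by
      have h4 : Real.logb 2 (K₂ + 1) ≤ t :=
        le_trans (le_max_left _ _) (le_max_right _ _)
      have h5 : Real.logb 2 (n:ℝ) ≤ P := by rw [hP_split]; linarith
      linarith [hlogn_t]
    linarith
  -- main contradiction argument
  by_contra hcontra
  push_neg at hcontra
  have hmQ : m = ⌈(n : ℝ) * Real.logb 2 (3 * γ / ε)⌉₊ := by rw [hm_def, hS_def, hQ_def]
  have hcover : entropyNum K m ≤ 2 * ε := by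
    rw [hmQ]
    exact entropy_le_of_lipWidth K hK hεpos hε1 hγ1 hcontra
  have hεm := hε m hm2
  have hup : c₁ * Real.logb 2 (m:ℝ) ^ (-α) ≤ 2 * ε := le_trans hεm hcover
  have hlow : (2 * P) ^ (-α) ≤ Real.logb 2 (m:ℝ) ^ (-α) :=
    Real.rpow_le_rpow_of_nonpos (by linarith) hlogm (by linarith)
  have h2P : (2 * P) ^ (-α) = (2:ℝ) ^ (-α) * P ^ (-α) := Real.mul_rpow (by norm_num) hPpos.le
  have hfinal : c₁ * (2:ℝ) ^ (-α) * P ^ (-α) ≤ (2 * C) * P ^ (-α) := by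
    have h1 : c₁ * ((2 * P) ^ (-α)) ≤ c₁ * Real.logb 2 (m:ℝ) ^ (-α) :=
      mul_le_mul_of_nonneg_left hlow hc₁.le
    rw [h2P] at h1
    have h2 : c₁ * ((2:ℝ) ^ (-α) * P ^ (-α)) = c₁ * (2:ℝ) ^ (-α) * P ^ (-α) := by ring
    rw [h2] at h1
    have h3 : 2 * ε = (2 * C) * P ^ (-α) := by rw [hε_def]; ring
    linarith
  have hcancel : c₁ * (2:ℝ) ^ (-α) ≤ 2 * C := (mul_le_mul_iff_left₀ hPα_pos).mp hfinal
  have hpos : 0 < c₁ * (2:ℝ) ^ (-α) := mul_pos hc₁ h2a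
  linarith
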